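/- Let (a_n)_{n≥3} with a_n = 1/(n log n). If (T_j)_{j≥1} are independent random variables with P(T_j = ⌊(j+2)√(log(j+2))⌋ + 1) = a_{j+2} and P(T_j = 1) = 1 − a_{j+2}, then almost surely limsup_{j→∞} (T_j)/j = +∞. Consequently, setting τ_j = T_1 + … + T_j, almost surely for every ε, R > 0 there is j₀ with j₀ < ε/(R+1)·τ_{j₀}. -/

import Mathlib

open MeasureTheory Set Filter
open scoped ENNReal

lemma aux_not_summable : ¬ Summable (fun n : ℕ => 1 / (((n : ℝ) + 2) * Real.log ((n : ℝ) + 2))) := by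
  set f : ℕ → ℝ := fun n => 1 / (((n : ℝ) + 2) * Real.log ((n : ℝ) + 2)) with hf
  have hlogpos : ∀ n : ℕ, 0 < Real.log ((n : ℝ) + 2) := by
    intro n
    apply Real.log_pos
    have : (0:ℝ) ≤ (n:ℝ) := Nat.cast_nonneg n
    linarith
  have hpos : ∀ n : ℕ, 0 < f n := by
    intro n
    apply div_pos one_pos
    apply mul_pos (by positivity) (hlogpos n)
  have hanti : ∀ ⦃m n : ℕ⦄, 0 < m → m ≤ n → f n ≤ f m := by
    intro m n _ hmn
    apply one_div_le_one_div_of_le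
    · exact mul_pos (by positivity) (hlogpos m)
    · have h1 : ((m:ℝ) + 2) ≤ ((n:ℝ) + 2) := by
        have : (m:ℝ) ≤ (n:ℝ) := Nat.cast_le.2 hmn
        linarith
      have h2 : Real.log ((m:ℝ) + 2) ≤ Real.log ((n:ℝ) + 2) :=
        Real.log_le_log (by positivity) h1
      exact mul_le_mul h1 h2 (hlogpos m).le (by positivity)
  intro hsum
  rw [← summable_condensed_iff_of_nonneg (fun n => (hpos n).le) hanti] at hsum
  -- compare with harmonic series
  have hcomp : ∀ k : ℕ, 1 / (3 * Real.log 2 * ((k:ℝ) + 2)) ≤ (2:ℝ) ^ k * f (2 ^ k) := by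
    intro k
    have h2k : (1:ℝ) ≤ (2:ℝ) ^ k := one_le_pow₀ (by norm_num)
    have h2kpos : (0:ℝ) < (2:ℝ) ^ k := by positivity
    have hcast : ((2 ^ k : ℕ) : ℝ) = (2:ℝ) ^ k := by push_cast; ring
    have hlog2 : (0:ℝ) < Real.log 2 := Real.log_pos (by norm_num)
    have hx : (0:ℝ) < (2:ℝ)^k + 2 := by linarith
    have hlogx : 0 < Real.log ((2:ℝ)^k + 2) := Real.log_pos (by linarith)
    have hub1 : (2:ℝ)^k + 2 ≤ 3 * (2:ℝ)^k := by linarith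
    have hub2 : Real.log ((2:ℝ)^k + 2) ≤ ((k:ℝ) + 2) * Real.log 2 := by
      have : (2:ℝ)^k + 2 ≤ (2:ℝ) ^ (k + 2) := by
        rw [pow_add]; norm_num; linarith
      calc Real.log ((2:ℝ)^k + 2) ≤ Real.log ((2:ℝ) ^ (k+2)) := Real.log_le_log hx this
        _ = ((k:ℝ) + 2) * Real.log 2 := by
            rw [Real.log_pow]; push_cast; ring
    have key : ((2:ℝ)^k + 2) * Real.log ((2:ℝ)^k + 2)
        ≤ (3 * (2:ℝ)^k) * (((k:ℝ) + 2) * Real.log 2) :=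
      mul_le_mul hub1 hub2 hlogx.le (by positivity)
    rw [hf]
    simp only [hcast]
    rw [mul_one_div, div_le_div_iff₀ (by positivity) (mul_pos hx hlogx), one_mul]
    calc ((2:ℝ)^k + 2) * Real.log ((2:ℝ)^k + 2)
        ≤ (3 * (2:ℝ)^k) * (((k:ℝ) + 2) * Real.log 2) := key
      _ = (2:ℝ)^k * (3 * Real.log 2 * ((k:ℝ) + 2)) := by ring
  have hsum2 : Summable (fun k : ℕ => 1 / (3 * Real.log 2 * ((k:ℝ) + 2))) := by
    apply Summable.of_nonneg_of_le (fun k => by positivity) hcomp hsum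
  have hlog2 : (0:ℝ) < Real.log 2 := Real.log_pos (by norm_num)
  have hsum3 : Summable (fun k : ℕ => 1 / ((k:ℝ) + 2)) := by
    have := hsum2.mul_left (3 * Real.log 2)
    apply this.congr
    intro k
    field_simp
  have hsum4 : Summable (fun k : ℕ => 1 / ((k:ℝ))) := by
    rw [← summable_nat_add_iff 2]
    apply hsum3.congr
    intro k
    push_cast
    ring_nf
  exact Real.not_summable_one_div_natCast hsum4

/-- Borel–Cantelli step of Example 2 (escape of empirical measures): if `(T_j)` are
independent with `P(T_j = ⌊(j+2)√(log(j+2))⌋ + 1) = 1/((j+2) log(j+2))` and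
`P(T_j = 1)` the complementary probability, then almost surely
`limsup_j T_j / j = +∞`; consequently, with `τ_j = T_1 + … + T_j`, almost surely for all
`ε, R > 0` there is `j₀` with `j₀ < ε/(R+1) · τ_{j₀}`. -/
theorem stmt15 {E : Type*} [MeasurableSpace E] (P : Measure E) [IsProbabilityMeasure P]
    (T : ℕ → E → ℕ) (hmeas : ∀ j, Measurable (T j))
    (hindep : ProbabilityTheory.iIndepFun T P)
    (hbig : ∀ j : ℕ, 1 ≤ j →
      P {e | T j e = Nat.floor (((j : ℝ) + 2) * Real.sqrt (Real.log ((j : ℝ) + 2))) + 1}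
        = ENNReal.ofReal (1 / (((j : ℝ) + 2) * Real.log ((j : ℝ) + 2))))
    (hone : ∀ j : ℕ, 1 ≤ j →
      P {e | T j e = 1}
        = 1 - ENNReal.ofReal (1 / (((j : ℝ) + 2) * Real.log ((j : ℝ) + 2)))) :
    ∀ᵐ e ∂ P,
      (∀ C : ℝ, ∃ᶠ j in Filter.atTop, C < (T j e : ℝ) / j) ∧
      (∀ ε R : ℝ, 0 < ε → 0 < R → ∃ j₀ : ℕ, 1 ≤ j₀ ∧
        (j₀ : ℝ) < ε / (R + 1) * ∑ i ∈ Finset.Icc 1 j₀, (T i e : ℝ)) := by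
  classical
  set v : ℕ → ℕ := fun j => Nat.floor (((j : ℝ) + 2) * Real.sqrt (Real.log ((j : ℝ) + 2))) + 1
    with hv
  set s : ℕ → Set E := fun j => T j ⁻¹' {v j} with hs
  have hsm : ∀ j, MeasurableSet (s j) := fun j => (hmeas j) (measurableSet_singleton _)
  -- independence of the sets
  have hindepS : ProbabilityTheory.iIndepSet s P := by
    apply ProbabilityTheory.iIndepSets.iIndepSet_of_mem
      (π := fun i => {t | MeasurableSet[MeasurableSpace.comap (T i) inferInstance] t})
    · intro i
      exact ⟨{v i}, measurableSet_singleton _, rfl⟩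
    · exact hsm
    · exact hindep.iIndep.iIndepSets'
  -- the sum of the measures is infinite
  have htsum : (∑' j, P (s j)) = ∞ := by
    have hshift : (∑' j : ℕ, P (s (j + 1)))
        = ∑' j : ℕ, ENNReal.ofReal (1 / ((((j:ℕ) + 1 : ℝ) + 2) * Real.log (((j:ℕ) + 1 : ℝ) + 2))) := by
      congr 1
      funext j
      have := hbig (j + 1) (Nat.le_add_left 1 j)
      rw [hs]
      show P {e | T (j + 1) e = Nat.floor ((((j + 1 : ℕ) : ℝ) + 2) * Real.sqrt (Real.log (((j + 1 : ℕ) : ℝ) + 2))) + 1} = _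
      convert this using 3 <;> push_cast <;> ring_nf
    have hnots : ¬ Summable (fun j : ℕ =>
        1 / ((((j:ℕ) + 1 : ℝ) + 2) * Real.log (((j:ℕ) + 1 : ℝ) + 2))) := by
      intro h
      apply aux_not_summable
      rw [← summable_nat_add_iff 1]
      apply h.congr
      intro k
      push_cast
      ring_nf
    have htop : (∑' j : ℕ, ENNReal.ofReal
        (1 / ((((j:ℕ) + 1 : ℝ) + 2) * Real.log (((j:ℕ) + 1 : ℝ) + 2)))) = ∞ := by
      set g : ℕ → ℝ := fun j => 1 / ((((j:ℕ) + 1 : ℝ) + 2) * Real.log (((j:ℕ) + 1 : ℝ) + 2))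
        with hg
      have hgnn : ∀ j, 0 ≤ g j := by
        intro j
        have : (0:ℝ) < Real.log (((j:ℕ) + 1 : ℝ) + 2) := by
          apply Real.log_pos
          have : (0:ℝ) ≤ (j:ℝ) := Nat.cast_nonneg j
          linarith
        positivity
      have : (fun j : ℕ => ENNReal.ofReal (g j)) = fun j => ((g j).toNNReal : ℝ≥0∞) := rfl
      rw [this, ENNReal.tsum_coe_eq_top_iff_not_summable_coe]
      intro h
      apply hnots
      apply h.congr
      intro k
      simp [Real.coe_toNNReal _ (hgnn k)]
    refine top_unique ?_
    rw [← htop]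
    refine ENNReal.summable.tsum_le_tsum_of_inj (fun j => j + 1) (add_left_injective 1)
      (fun _ _ => zero_le) (fun j => ?_) ENNReal.summable
    have := hbig (j + 1) (Nat.le_add_left 1 j)
    rw [hs]
    refine le_of_eq ?_
    rw [show ({e | T (j+1) e = v (j+1)} : Set E) = T (j+1) ⁻¹' {v (j+1)} from rfl] at this
    rw [this]
    congr 2 <;> push_cast <;> ring
  have hlimsup : P (limsup s atTop) = 1 :=
    ProbabilityTheory.measure_limsup_eq_one hsm hindepS htsum
  have hmlim : MeasurableSet (limsup s atTop) := by
    rw [limsup_eq_iInf_iSup_of_nat]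
    exact MeasurableSet.iInter fun n => MeasurableSet.iUnion fun i =>
      MeasurableSet.iUnion fun _ => hsm i
  have hae : ∀ᵐ e ∂P, e ∈ limsup s atTop := by
    rw [ae_iff]
    have : {e | ¬ e ∈ limsup s atTop} = (limsup s atTop)ᶜ := rfl
    rw [this, prob_compl_eq_zero_iff hmlim]
    exact hlimsup
  filter_upwards [hae] with e he
  rw [mem_limsup_iff_frequently_mem] at he
  -- Main claim: for all C, frequently C < T j e / j
  have main : ∀ C : ℝ, ∃ᶠ j in Filter.atTop, C < (T j e : ℝ) / j := by
    intro C
    have hev : ∀ᶠ j in Filter.atTop, (e ∈ s j → C < (T j e : ℝ) / j) := by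
      obtain ⟨N, hN⟩ : ∃ N : ℕ, max C 0 < Real.sqrt (Real.log ((N : ℝ) + 2)) := by
        obtain ⟨N, hN⟩ := exists_nat_gt (Real.exp ((max C 0 + 1)^2) + 1)
        refine ⟨N, ?_⟩
        have h1 : Real.exp ((max C 0 + 1)^2) < (N:ℝ) + 2 := by linarith
        have h2 : (max C 0 + 1)^2 < Real.log ((N:ℝ) + 2) := by
          rw [← Real.log_exp ((max C 0 + 1)^2)]
          exact Real.log_lt_log (Real.exp_pos _) h1
        have h3 : max C 0 + 1 ≤ Real.sqrt ((max C 0 + 1)^2) := by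
          rw [Real.sqrt_sq (by positivity)]
        have h4 : Real.sqrt ((max C 0 + 1)^2) ≤ Real.sqrt (Real.log ((N:ℝ)+2)) :=
          Real.sqrt_le_sqrt h2.le
        have h5 : (0:ℝ) ≤ max C 0 := le_max_right _ _
        linarith
      filter_upwards [Filter.eventually_ge_atTop (max N 1)] with j hj hje
      have hj1 : 1 ≤ j := le_trans (le_max_right N 1) hj
      have hjN : N ≤ j := le_trans (le_max_left N 1) hj
      have hjpos : (0:ℝ) < (j:ℝ) := by exact_mod_cast hj1
      have hsle : Real.sqrt (Real.log ((N:ℝ)+2)) ≤ Real.sqrt (Real.log ((j:ℝ)+2)) := by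
        apply Real.sqrt_le_sqrt
        apply Real.log_le_log (by positivity)
        have : (N:ℝ) ≤ (j:ℝ) := Nat.cast_le.2 hjN
        linarith
      set q := Real.sqrt (Real.log ((j:ℝ)+2)) with hq
      have hqC : max C 0 < q := lt_of_lt_of_le hN hsle
      have hqpos : 0 < q := lt_of_le_of_lt (le_max_right C 0) hqC
      -- T j e = v j
      have hT : T j e = v j := hje
      have hflr : ((j:ℝ) + 2) * q < (v j : ℝ) := by
        rw [hv]
        push_cast
        have := Nat.lt_floor_add_one (((j : ℝ) + 2) * q)
        linarith [Nat.lt_floor_add_one (((j : ℝ) + 2) * q)]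
      have hchain : C * j < (T j e : ℝ) := by
        rw [hT]
        calc C * j ≤ max C 0 * j := by
              apply mul_le_mul_of_nonneg_right (le_max_left C 0) hjpos.le
          _ < q * j := by apply mul_lt_mul_of_pos_right hqC hjpos
          _ ≤ ((j:ℝ) + 2) * q := by
              rw [mul_comm]
              apply mul_le_mul_of_nonneg_right (by linarith) hqpos.le
          _ < (v j : ℝ) := hflr
      rw [lt_div_iff₀ hjpos]
      exact hchain
    exact (he.and_eventually hev).mono fun j ⟨h1, h2⟩ => h2 h1
  refine ⟨main, ?_⟩
  intro ε R hε hR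
  have hRε : (0:ℝ) < (R + 1) / ε := by positivity
  obtain ⟨j, hj1, hjC⟩ :=
    ((main ((R+1)/ε)).and_eventually (Filter.eventually_ge_atTop 1)).exists
  refine ⟨j, hjC, ?_⟩
  have hjpos : (0:ℝ) < (j:ℝ) := by exact_mod_cast hjC
  rw [lt_div_iff₀ hjpos] at hj1
  have hsum_ge : (T j e : ℝ) ≤ ∑ i ∈ Finset.Icc 1 j, (T i e : ℝ) := by
    apply Finset.single_le_sum (f := fun i => (T i e : ℝ))
    · intro i _; positivity
    · simp [hjC]
  have hfrac : (0:ℝ) < ε / (R + 1) := by positivity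
  calc (j:ℝ) = (ε / (R+1)) * ((R+1)/ε * j) := by field_simp
    _ < (ε / (R+1)) * (T j e : ℝ) := by
        apply mul_lt_mul_of_pos_left hj1 hfrac
    _ ≤ (ε / (R+1)) * ∑ i ∈ Finset.Icc 1 j, (T i e : ℝ) := by
        apply mul_le_mul_of_nonneg_left hsum_ge hfrac.le
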